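/- With V as the correlation-pattern matrix of PWO factors for m components, the trace of (I + V/3)^{-1} equals 3m(m−1)^2 / (2(m+1)). -/

import Mathlib

open Matrix


/-- Index type of the pairs `{i < j}` of components. -/
abbrev PairIdx (m : ℕ) := {p : Fin m × Fin m // p.1 < p.2}

/-- The PWO correlation-pattern matrix `V`. -/
noncomputable def Vmat (m : ℕ) : Matrix (PairIdx m) (PairIdx m) ℝ := fun a b =>
  if a = b then 0
  else if a.1.1 = b.1.1 ∨ a.1.2 = b.1.2 then 1
  else if a.1.2 = b.1.1 ∨ a.1.1 = b.1.2 then -1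
  else 0

/-- Entry of the oriented incidence matrix of the complete graph. -/
noncomputable def nent (m : ℕ) (v i j : Fin m) : ℝ :=
  if v = i then -1 else if v = j then 1 else 0

/-- The oriented incidence matrix of `K_m`. -/
noncomputable def Nmat (m : ℕ) : Matrix (Fin m) (PairIdx m) ℝ := fun v e =>
  nent m v e.1.1 e.1.2

lemma nent_sq (m : ℕ) (u i j : Fin m) :
    (if i < j then nent m u i j * nent m u i j else 0)
      = (if i = u ∧ u < j then (1:ℝ) else 0) + (if j = u ∧ i < u then 1 else 0) := by
  unfold nent
  rcases lt_or_ge i j with h | h <;>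
    rcases eq_or_ne u i with h1 | h1 <;> rcases eq_or_ne u j with h2 | h2 <;>
    subst_vars <;> simp_all [eq_comm] <;> omega

lemma nent_mul (m : ℕ) (u v i j : Fin m) (huv : u ≠ v) :
    (if i < j then nent m u i j * nent m v i j else 0)
      = (if i = u ∧ j = v ∧ u < v then (-1:ℝ) else 0)
        + (if i = v ∧ j = u ∧ v < u then -1 else 0) := by
  unfold nent
  rcases lt_or_ge i j with h | h <;>
    rcases eq_or_ne u i with h1 | h1 <;> rcases eq_or_ne u j with h2 | h2 <;>
    rcases eq_or_ne v i with h3 | h3 <;> rcases eq_or_ne v j with h4 | h4 <;>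
    subst_vars <;> simp_all [eq_comm] <;> omega

lemma colsum (m : ℕ) (e : PairIdx m) : ∑ v, Nmat m v e = 0 := by
  obtain ⟨⟨i, j⟩, hij⟩ := e
  have hij' : i < j := hij
  have : ∀ v : Fin m, Nmat m v ⟨(i, j), hij⟩
      = (if v = i then (-1:ℝ) else 0) + (if v = j then 1 else 0) := by
    intro v
    unfold Nmat nent
    rcases eq_or_ne v i with h1 | h1 <;> rcases eq_or_ne v j with h2 | h2 <;>
      subst_vars <;> simp_all
  simp [this, Finset.sum_add_distrib]

/-- `N Nᵀ = m I − J`. -/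
lemma NNt (m : ℕ) :
    Nmat m * (Nmat m)ᵀ = (m:ℝ) • 1 - Matrix.of (fun _ _ => (1:ℝ)) := by
  ext u v
  rw [Matrix.mul_apply]
  simp only [Matrix.transpose_apply]
  have hsum : ∑ e : PairIdx m, Nmat m u e * Nmat m v e
      = ∑ p ∈ Finset.univ.filter (fun p : Fin m × Fin m => p.1 < p.2),
          nent m u p.1 p.2 * nent m v p.1 p.2 := by
    rw [Finset.sum_subtype (p := fun p : Fin m × Fin m => p.1 < p.2)
      (Finset.univ.filter fun p : Fin m × Fin m => p.1 < p.2)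
      (by simp) (fun p => nent m u p.1 p.2 * nent m v p.1 p.2)]
    rfl
  rw [hsum, Finset.sum_filter, Fintype.sum_prod_type]
  rcases eq_or_ne u v with huv | huv
  · subst huv
    have : ∀ i j : Fin m, (if i < j then nent m u i j * nent m u i j else 0)
        = (if i = u ∧ u < j then (1:ℝ) else 0) + (if j = u ∧ i < u then 1 else 0) :=
      fun i j => nent_sq m u i j
    have cardIoi : ∑ j : Fin m, (if u < j then (1:ℝ) else 0) = ((m - 1 - (u:ℕ) : ℕ) : ℝ) := by
      rw [Finset.sum_boole]
      congr 1
      have h1 : (Finset.univ.filter fun j : Fin m => u < j) = Finset.Ioi u := by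
        ext x; simp
      rw [h1, Fin.card_Ioi]
    have cardIio : ∑ i : Fin m, (if i < u then (1:ℝ) else 0) = ((u:ℕ) : ℝ) := by
      rw [Finset.sum_boole]
      congr 1
      have h2 : (Finset.univ.filter fun i : Fin m => i < u) = Finset.Iio u := by
        ext x; simp
      rw [h2, Fin.card_Iio]
    have hA : ∀ i : Fin m, ∑ j : Fin m, (if i = u ∧ u < j then (1:ℝ) else 0)
        = if i = u then ((m - 1 - (u:ℕ) : ℕ) : ℝ) else 0 := by
      intro i
      by_cases hi : i = u <;> simp [hi, cardIoi]
    have hB : ∀ i : Fin m, ∑ j : Fin m, (if j = u ∧ i < u then (1:ℝ) else 0)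
        = if i < u then (1:ℝ) else 0 := by
      intro i
      by_cases hi : i < u <;> simp [hi]
    simp only [this, Finset.sum_add_distrib, hA, hB]
    rw [Finset.sum_ite_eq' Finset.univ u, cardIio]
    have hu : (u : ℕ) < m := u.isLt
    have hval : ((m - 1 - (u:ℕ) : ℕ) : ℝ) + ((u:ℕ) : ℝ) = (m:ℝ) - 1 := by
      rw [Nat.cast_sub (by omega), Nat.cast_sub (by omega)]
      push_cast
      ring
    simp only [Finset.mem_univ, if_true]
    rw [hval]
    simp [Matrix.one_apply]
  · have : ∀ i j : Fin m, (if i < j then nent m u i j * nent m v i j else 0)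
        = (if i = u ∧ j = v ∧ u < v then (-1:ℝ) else 0)
          + (if i = v ∧ j = u ∧ v < u then -1 else 0) :=
      fun i j => nent_mul m u v i j huv
    have hA : ∀ i : Fin m, ∑ j : Fin m, (if i = u ∧ j = v ∧ u < v then (-1:ℝ) else 0)
        = if i = u ∧ u < v then (-1:ℝ) else 0 := by
      intro i
      by_cases hi : i = u <;> by_cases huv' : u < v <;> simp [hi, huv']
    have hB : ∀ i : Fin m, ∑ j : Fin m, (if i = v ∧ j = u ∧ v < u then (-1:ℝ) else 0)
        = if i = v ∧ v < u then (-1:ℝ) else 0 := by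
      intro i
      by_cases hi : i = v <;> by_cases huv' : v < u <;> simp [hi, huv']
    have hA' : ∑ i : Fin m, (if i = u ∧ u < v then (-1:ℝ) else 0)
        = if u < v then (-1:ℝ) else 0 := by
      simp only [ite_and]
      rw [Finset.sum_ite_eq' Finset.univ u]
      simp
    have hB' : ∑ i : Fin m, (if i = v ∧ v < u then (-1:ℝ) else 0)
        = if v < u then (-1:ℝ) else 0 := by
      simp only [ite_and]
      rw [Finset.sum_ite_eq' Finset.univ v]
      simp
    simp only [this, Finset.sum_add_distrib, hA, hB]
    rw [hA', hB']
    have : ((if u < v then (-1:ℝ) else 0) + if v < u then (-1:ℝ) else 0) = -1 := by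
      rcases huv.lt_or_gt with h | h
      · simp [h, lt_asymm h]
      · simp [h, lt_asymm h]
    rw [this]
    simp [Matrix.one_apply_ne huv]

lemma JN (m : ℕ) : (Matrix.of (fun _ _ => (1:ℝ)) : Matrix (Fin m) (Fin m) ℝ) * Nmat m = 0 := by
  ext v e
  rw [Matrix.mul_apply]
  simp [colsum m e]

/-- `NᵀN = V + 2I`. -/
lemma NtN (m : ℕ) : (Nmat m)ᵀ * Nmat m = Vmat m + (2:ℝ) • 1 := by
  ext e f
  rw [Matrix.mul_apply]
  simp only [Matrix.transpose_apply]
  obtain ⟨⟨i, j⟩, hij⟩ := e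
  obtain ⟨⟨k, l⟩, hkl⟩ := f
  have hij' : i < j := hij
  have hkl' : k < l := hkl
  have hrestrict : ∑ v, Nmat m v ⟨(i,j), hij⟩ * Nmat m v ⟨(k,l), hkl⟩
      = nent m i i j * nent m i k l + nent m j i j * nent m j k l := by
    rw [← Finset.sum_subset (Finset.subset_univ ({i, j} : Finset (Fin m)))
      (fun v _ hv => ?_)]
    · rw [Finset.sum_pair (ne_of_lt hij')]
      rfl
    · simp only [Finset.mem_insert, Finset.mem_singleton, not_or] at hv
      unfold Nmat nent
      simp [hv.1, hv.2]
  rw [hrestrict]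
  have e1 : nent m i i j = -1 := by simp [nent]
  have e2 : nent m j i j = 1 := by simp [nent, (ne_of_lt hij').symm]
  rw [e1, e2]
  clear hrestrict e1 e2
  have hiff : (⟨(i,j),hij⟩ : PairIdx m) = ⟨(k,l),hkl⟩ ↔ (i = k ∧ j = l) := by
    simp [Subtype.ext_iff, Prod.ext_iff]
  rw [Matrix.add_apply, Matrix.smul_apply, Matrix.one_apply,
    if_congr hiff rfl rfl,
    show Vmat m ⟨(i,j),hij⟩ ⟨(k,l),hkl⟩
      = (if i = k ∧ j = l then (0:ℝ)
          else if i = k ∨ j = l then 1 else if j = k ∨ i = l then -1 else 0) from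
      if_congr hiff rfl rfl]
  unfold nent
  clear hiff hij hkl
  simp only [smul_eq_mul]
  rcases eq_or_ne i k with h1 | h1 <;> rcases eq_or_ne i l with h2 | h2 <;>
    rcases eq_or_ne j k with h3 | h3 <;> rcases eq_or_ne j l with h4 | h4 <;>
    subst_vars <;> simp_all [eq_comm] <;>
    first
    | omega
    | norm_num
    | norm_num


/-- `trace((I + V/3)⁻¹) = 3m(m-1)² / (2(m+1))`. -/
theorem stmt10 (m : ℕ) (hm : 3 ≤ m)
    (hinv : IsUnit (1 + (3 : ℝ)⁻¹ • Vmat m).det) :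
    Matrix.trace (1 + (3 : ℝ)⁻¹ • Vmat m)⁻¹
      = 3 * (m : ℝ) * ((m : ℝ) - 1) ^ 2 / (2 * ((m : ℝ) + 1)) := by
  set S := (Nmat m)ᵀ * Nmat m with hS
  have key2 : S * S = (m:ℝ) • S := by
    calc S * S = (Nmat m)ᵀ * ((Nmat m * (Nmat m)ᵀ) * Nmat m) := by
          simp only [hS, Matrix.mul_assoc]
      _ = (Nmat m)ᵀ * (((m:ℝ) • 1 - (Matrix.of (fun _ _ => (1:ℝ)) : Matrix (Fin m) (Fin m) ℝ)) * Nmat m) := by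
          rw [NNt]
      _ = (m:ℝ) • S := by
          rw [Matrix.sub_mul, Matrix.smul_mul, Matrix.one_mul, JN, Matrix.mul_sub, Matrix.mul_smul,
            Matrix.mul_zero, sub_zero, hS]
  have hV : Vmat m = S - (2:ℝ) • 1 := by rw [hS, NtN]; abel
  have keyV : Vmat m * Vmat m = ((m:ℝ) - 4) • Vmat m + (2 * (m:ℝ) - 4) • 1 := by
    calc Vmat m * Vmat m = (S - (2:ℝ)•1) * (S - (2:ℝ)•1) := by rw [← hV]
      _ = S * S - (4:ℝ) • S + (4:ℝ) • 1 := by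
          simp only [Matrix.sub_mul, Matrix.mul_sub, Matrix.smul_mul, Matrix.mul_smul,
            one_mul, mul_one, smul_smul]
          module
      _ = (m:ℝ) • S - (4:ℝ) • S + (4:ℝ) • 1 := by rw [key2]
      _ = ((m:ℝ) - 4) • Vmat m + (2 * (m:ℝ) - 4) • 1 := by
          rw [hS, NtN]
          module
  have hm1 : ((m:ℝ) + 1) ≠ 0 := by positivity
  set W : Matrix (PairIdx m) (PairIdx m) ℝ :=
    (3 / ((m:ℝ) + 1)) • (((m:ℝ) - 1) • 1 - Vmat m) with hW
  have hright : (1 + (3:ℝ)⁻¹ • Vmat m) * W = 1 := by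
    rw [hW, Matrix.mul_smul, mul_sub, Matrix.mul_smul, Matrix.mul_one, Matrix.add_mul,
      Matrix.smul_mul, Matrix.one_mul, keyV]
    match_scalars <;> field_simp <;> ring
  have hInv : (1 + (3:ℝ)⁻¹ • Vmat m)⁻¹ = W := Matrix.inv_eq_right_inv hright
  have traceV : Matrix.trace (Vmat m) = 0 := by
    simp [Matrix.trace, Matrix.diag, Vmat]
  have t1 : Matrix.trace S = (m:ℝ) * m - (m:ℝ) := by
    rw [hS, Matrix.trace_mul_comm, NNt]
    simp [Matrix.trace_sub, Matrix.trace_smul, Matrix.trace, Matrix.diag, Finset.mul_sum,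
      mul_comm]
  have t2 : Matrix.trace S = 2 * (Fintype.card (PairIdx m) : ℝ) := by
    rw [hS, NtN, Matrix.trace_add, Matrix.trace_smul, Matrix.trace_one, traceV]
    simp
  have hc : (Fintype.card (PairIdx m) : ℝ) = ((m:ℝ) * m - m) / 2 := by linarith
  rw [hInv, hW, Matrix.trace_smul, Matrix.trace_sub, Matrix.trace_smul, Matrix.trace_one,
    traceV]
  rw [hc]
  simp only [smul_eq_mul, sub_zero]
  field_simp
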